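/- Let X be a finite-dimensional real vector space, K ⊂ X a convex body with 0 in its interior, and Ψ the Minkowski norm (gauge) associated to K. Let W : X → X be a homogeneous polynomial vector field and f : X → ℝ a nonzero homogeneous polynomial function such that the vector field x ↦ f(x)·W(x) is forward tangent to ∂K. Then Ψ is constant along every trajectory of W, and W is tangent to ∂K. -/

import Mathlib

open Filter Topology

/-- `v` is *forward tangent* to `∂B` at `x` if there are a sequence `p i ∈ ∂B` with `p i → x`
and positive reals `c i` with `c i • (p i - x) → v`. -/
def IsForwardTangent {X : Type*} [NormedAddCommGroup X] [NormedSpace ℝ X]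
    (B : Set X) (x v : X) : Prop :=
  ∃ (p : ℕ → X) (c : ℕ → ℝ), (∀ i, p i ∈ frontier B) ∧ (∀ i, 0 < c i) ∧
    Tendsto p atTop (𝓝 x) ∧ Tendsto (fun i => c i • (p i - x)) atTop (𝓝 v)

/-- `v` is *tangent* to `∂B` at `x` if both `v` and `-v` are forward tangent to `∂B` at `x`. -/
def IsTangentVec {X : Type*} [NormedAddCommGroup X] [NormedSpace ℝ X]
    (B : Set X) (x v : X) : Prop :=
  IsForwardTangent B x v ∧ IsForwardTangent B x (-v)

/-- `W : X → X` is a *homogeneous polynomial vector field of degree `k`* if, in some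
(equivalently, any) linear coordinates given by a basis, the components of `W x` are
homogeneous polynomials of degree `k` in the coordinates of `x`. -/
def IsHomogPolyVectorField {X : Type*} [AddCommGroup X] [Module ℝ X]
    (k : ℕ) (W : X → X) : Prop :=
  ∃ (n : ℕ) (b : Module.Basis (Fin n) ℝ X) (P : Fin n → MvPolynomial (Fin n) ℝ),
    (∀ i, (P i).IsHomogeneous k) ∧
    ∀ x, W x = ∑ i, (MvPolynomial.eval (fun j => b.repr x j) (P i)) • b i

/-- `f : X → ℝ` is a *homogeneous polynomial function of degree `k`* if, in some
(equivalently, any) linear coordinates given by a basis, `f` is a homogeneous polynomial of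
degree `k` in the coordinates. -/
def IsHomogPolyFunction {X : Type*} [AddCommGroup X] [Module ℝ X]
    (k : ℕ) (f : X → ℝ) : Prop :=
  ∃ (n : ℕ) (b : Module.Basis (Fin n) ℝ X) (P : MvPolynomial (Fin n) ℝ),
    P.IsHomogeneous k ∧ ∀ x, f x = MvPolynomial.eval (fun j => b.repr x j) P

namespace GaugeTangentAux

open Set

variable {X : Type*} [NormedAddCommGroup X] [NormedSpace ℝ X] {K : Set X}

/-- Difference quotient of the gauge of `K` at `x` in direction `v`. -/
noncomputable def gslope (K : Set X) (x v : X) (t : ℝ) : ℝ :=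
  (gauge K (x + t • v) - gauge K x) / t

/-- One-sided (right) directional derivative of the gauge of `K` at `x` in direction `v`. -/
noncomputable def dg (K : Set X) (x v : X) : ℝ :=
  sInf (gslope K x v '' Ioi 0)

lemma gslope_mono (hKconv : Convex ℝ K) (habs : Absorbent ℝ K) (x v : X) :
    MonotoneOn (gslope K x v) (Ioi 0) := by
  rintro s (hs : (0:ℝ) < s) t (ht : (0:ℝ) < t) hst
  have hts : (s / t) * t = s := div_mul_cancel₀ s (ne_of_gt ht)
  have hxid : x + s • v = (1 - s / t) • x + (s / t) • (x + t • v) := by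
    rw [smul_add, ← add_assoc, ← add_smul, sub_add_cancel, one_smul, smul_smul, hts]
  have key : gauge K (x + s • v) ≤
      (1 - s / t) * gauge K x + (s / t) * gauge K (x + t • v) := by
    rw [hxid]
    refine (gauge_add_le hKconv habs _ _).trans ?_
    rw [gauge_smul_of_nonneg (by have := (div_le_one ht).mpr hst; linarith : (0:ℝ) ≤ 1 - s / t),
      gauge_smul_of_nonneg (by positivity : (0:ℝ) ≤ s / t)]
    · simp [smul_eq_mul]
  have key2 : gauge K (x + s • v) - gauge K x
      ≤ (s / t) * (gauge K (x + t • v) - gauge K x) := by nlinarith [key]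
  rw [gslope, gslope, div_le_div_iff₀ hs ht]
  calc (gauge K (x + s • v) - gauge K x) * t
      ≤ ((s / t) * (gauge K (x + t • v) - gauge K x)) * t :=
        mul_le_mul_of_nonneg_right key2 ht.le
    _ = (gauge K (x + t • v) - gauge K x) * s := by
        field_simp

lemma gslope_ge (hKconv : Convex ℝ K) (habs : Absorbent ℝ K) (x v : X)
    {t : ℝ} (ht : 0 < t) : -(gauge K (-v)) ≤ gslope K x v t := by
  have hxid : (x + t • v) + t • (-v) = x := by simp
  have key : gauge K x ≤ gauge K (x + t • v) + t * gauge K (-v) := by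
    calc gauge K x = gauge K ((x + t • v) + t • (-v)) := by rw [hxid]
      _ ≤ gauge K (x + t • v) + gauge K (t • (-v)) := gauge_add_le hKconv habs _ _
      _ = gauge K (x + t • v) + t * gauge K (-v) := by
          rw [gauge_smul_of_nonneg ht.le]; simp [smul_eq_mul]
  rw [gslope, le_div_iff₀ ht]
  nlinarith [key]

lemma gslope_bddBelow (hKconv : Convex ℝ K) (habs : Absorbent ℝ K) (x v : X) :
    BddBelow (gslope K x v '' Ioi 0) := by
  refine ⟨-(gauge K (-v)), ?_⟩
  rintro y ⟨t, ht, rfl⟩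
  exact gslope_ge hKconv habs x v ht

lemma tendsto_gslope (hKconv : Convex ℝ K) (habs : Absorbent ℝ K) (x v : X) :
    Tendsto (gslope K x v) (𝓝[>] 0) (𝓝 (dg K x v)) :=
  MonotoneOn.tendsto_nhdsGT (gslope_mono hKconv habs x v)
    (gslope_bddBelow hKconv habs x v)

lemma dg_eq_of_tendsto (hKconv : Convex ℝ K) (habs : Absorbent ℝ K) {x v : X} {L : ℝ}
    (h : Tendsto (gslope K x v) (𝓝[>] 0) (𝓝 L)) : dg K x v = L :=
  tendsto_nhds_unique (tendsto_gslope hKconv habs x v) h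

lemma dg_le_gslope (hKconv : Convex ℝ K) (habs : Absorbent ℝ K) (x v : X)
    {t : ℝ} (ht : 0 < t) : dg K x v ≤ gslope K x v t :=
  csInf_le (gslope_bddBelow hKconv habs x v) ⟨t, ht, rfl⟩

lemma dg_nonneg_of_gslope_nonneg {x v : X}
    (h : ∀ t : ℝ, 0 < t → 0 ≤ gslope K x v t) : 0 ≤ dg K x v := by
  refine le_csInf ⟨gslope K x v 1, 1, mem_Ioi.mpr one_pos, rfl⟩ ?_
  rintro y ⟨t, ht, rfl⟩
  exact h t ht

lemma dg_zero_right (hKconv : Convex ℝ K) (habs : Absorbent ℝ K) (x : X) :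
    dg K x (0 : X) = 0 := by
  refine dg_eq_of_tendsto hKconv habs ?_
  have : gslope K x (0 : X) = fun _ => (0:ℝ) := by
    funext t; simp [gslope]
  rw [this]
  exact tendsto_const_nhds

lemma tendsto_mul_pos {c : ℝ} (hc : 0 < c) :
    Tendsto (fun t : ℝ => c * t) (𝓝[>] 0) (𝓝[>] 0) := by
  refine tendsto_nhdsWithin_of_tendsto_nhds_of_eventually_within _ ?_ ?_
  · have : Tendsto (fun t : ℝ => c * t) (𝓝 0) (𝓝 (c * 0)) :=
      (continuous_const.mul continuous_id).tendsto 0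
    simpa using this.mono_left nhdsWithin_le_nhds
  · filter_upwards [self_mem_nhdsWithin] with t (ht : (0:ℝ) < t)
    exact mul_pos hc ht

lemma dg_smul_right (hKconv : Convex ℝ K) (habs : Absorbent ℝ K) (x v : X)
    {c : ℝ} (hc : 0 < c) : dg K x (c • v) = c * dg K x v := by
  refine dg_eq_of_tendsto hKconv habs ?_
  have h1 : Tendsto (fun t => c * gslope K x v (c * t)) (𝓝[>] 0) (𝓝 (c * dg K x v)) :=
    ((tendsto_gslope hKconv habs x v).comp (tendsto_mul_pos hc)).const_mul c
  refine Tendsto.congr' ?_ h1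
  filter_upwards [self_mem_nhdsWithin] with t (ht : (0:ℝ) < t)
  show c * gslope K x v (c * t) = gslope K x (c • v) t
  rw [gslope, gslope, smul_smul, mul_comm t c]
  rw [eq_div_iff (ne_of_gt ht)]
  field_simp

lemma dg_smul_left (hKconv : Convex ℝ K) (habs : Absorbent ℝ K) (x v : X)
    {l : ℝ} (hl : 0 < l) : dg K (l • x) v = dg K x v := by
  refine dg_eq_of_tendsto hKconv habs ?_
  have h1 : Tendsto (fun t => gslope K x v (l⁻¹ * t)) (𝓝[>] 0) (𝓝 (dg K x v)) :=
    (tendsto_gslope hKconv habs x v).comp (tendsto_mul_pos (by positivity))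
  refine Tendsto.congr' ?_ h1
  filter_upwards [self_mem_nhdsWithin] with t (ht : (0:ℝ) < t)
  show gslope K x v (l⁻¹ * t) = gslope K (l • x) v t
  have hxid : l • x + t • v = l • (x + (l⁻¹ * t) • v) := by
    rw [smul_add, smul_smul, ← mul_assoc, mul_inv_cancel₀ (ne_of_gt hl), one_mul]
  rw [gslope, gslope, hxid, gauge_smul_of_nonneg hl.le, gauge_smul_of_nonneg hl.le]
  simp only [smul_eq_mul]
  rw [div_eq_div_iff (by positivity) (by positivity)]
  ring_nf
  rw [mul_inv_cancel₀ (ne_of_gt hl)]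
  ring

lemma dg_eq_zero_of_isForwardTangent (hKconv : Convex ℝ K) (hK0 : K ∈ 𝓝 (0:X))
    {x v : X} (hx : x ∈ frontier K) (h : IsForwardTangent K x v) : dg K x v = 0 := by
  have habs : Absorbent ℝ K := absorbent_nhds_zero hK0
  by_cases hv : v = 0
  · rw [hv]; exact dg_zero_right hKconv habs x
  obtain ⟨p, c, hpfr, hcpos, hpx, hcv⟩ := h
  obtain ⟨C, hC⟩ := hKconv.lipschitz_gauge hK0
  have hΨx : gauge K x = 1 := (gauge_eq_one_iff_mem_frontier hKconv hK0).mpr hx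
  have hΨp : ∀ i, gauge K (p i) = 1 := fun i =>
    (gauge_eq_one_iff_mem_frontier hKconv hK0).mpr (hpfr i)
  set t : ℕ → ℝ := fun i => (c i)⁻¹ with ht_def
  have htpos : ∀ i, 0 < t i := fun i => inv_pos.mpr (hcpos i)
  have hne : ∀ᶠ i in atTop, p i ≠ x := by
    by_contra hcon
    rw [Filter.not_eventually] at hcon
    have hfreq : ∃ᶠ i in atTop, c i • (p i - x) = (fun _ => (0:X)) i := by
      refine hcon.mono fun i hi => ?_
      rw [not_not] at hi
      simp [hi]
    exact hv (tendsto_nhds_unique_of_frequently_eq hcv tendsto_const_nhds hfreq)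
  have ht0 : Tendsto t atTop (𝓝 0) := by
    have h1 : Tendsto (fun i => ‖p i - x‖ / ‖c i • (p i - x)‖) atTop (𝓝 (0 / ‖v‖)) := by
      refine Tendsto.div ?_ hcv.norm (norm_ne_zero_iff.mpr hv)
      have : Tendsto (fun i => p i - x) atTop (𝓝 (x - x)) := hpx.sub tendsto_const_nhds
      rw [sub_self] at this
      simpa using this.norm
    rw [zero_div] at h1
    refine Tendsto.congr' ?_ h1
    filter_upwards [hne] with i hi
    rw [norm_smul, Real.norm_of_nonneg (hcpos i).le]
    rw [div_mul_eq_div_div_swap, div_self (by simpa [sub_eq_zero] using hi), one_div]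
  have htt : Tendsto t atTop (𝓝[>] 0) :=
    tendsto_nhdsWithin_of_tendsto_nhds_of_eventually_within _ ht0
      (Eventually.of_forall htpos)
  have hkey : ∀ i, |gslope K x v (t i)| ≤ (C : ℝ) * ‖v - c i • (p i - x)‖ := by
    intro i
    have hid : x + t i • v - p i = t i • (v - c i • (p i - x)) := by
      rw [smul_sub, smul_smul, ht_def]
      simp only []
      rw [inv_mul_cancel₀ (ne_of_gt (hcpos i)), one_smul]
      abel
    have hlip : |gauge K (x + t i • v) - gauge K (p i)| ≤ (C : ℝ) * ‖x + t i • v - p i‖ := by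
      have := hC.dist_le_mul (x + t i • v) (p i)
      rwa [Real.dist_eq, dist_eq_norm] at this
    rw [hid, norm_smul, Real.norm_of_nonneg (htpos i).le] at hlip
    have e1 : gslope K x v (t i) = (gauge K (x + t i • v) - gauge K (p i)) / t i := by
      rw [gslope, hΨx, hΨp i]
    rw [e1, abs_div, abs_of_pos (htpos i), div_le_iff₀ (htpos i)]
    calc |gauge K (x + t i • v) - gauge K (p i)|
        ≤ (C:ℝ) * (t i * ‖v - c i • (p i - x)‖) := hlip
      _ = (C:ℝ) * ‖v - c i • (p i - x)‖ * t i := by ring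
  have hsq : Tendsto (fun i => gslope K x v (t i)) atTop (𝓝 0) := by
    refine squeeze_zero_norm (fun i => by simpa using hkey i) ?_
    have h2 : Tendsto (fun i => v - c i • (p i - x)) atTop (𝓝 (v - v)) :=
      tendsto_const_nhds.sub hcv
    rw [sub_self] at h2
    have h3 := h2.norm.const_mul (C:ℝ)
    simpa using h3
  exact tendsto_nhds_unique ((tendsto_gslope hKconv habs x v).comp htt) hsq

lemma isForwardTangent_of_dg_eq_zero (hKconv : Convex ℝ K) (hK0 : K ∈ 𝓝 (0:X))
    {x v : X} (hx : x ∈ frontier K) (h : dg K x v = 0) : IsForwardTangent K x v := by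
  have habs : Absorbent ℝ K := absorbent_nhds_zero hK0
  have hΨx : gauge K x = 1 := (gauge_eq_one_iff_mem_frontier hKconv hK0).mpr hx
  have hΨcont : Continuous (gauge K) := continuous_gauge hKconv hK0
  set t : ℕ → ℝ := fun i => ((i : ℝ) + 1)⁻¹ with ht_def
  have htpos : ∀ i, 0 < t i := fun i => by positivity
  have ht0 : Tendsto t atTop (𝓝 0) := tendsto_one_div_add_atTop_nhds_zero_nat.congr (by
    intro i; rw [one_div])
  have htt : Tendsto t atTop (𝓝[>] 0) :=
    tendsto_nhdsWithin_of_tendsto_nhds_of_eventually_within _ ht0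
      (Eventually.of_forall htpos)
  have hxt : Tendsto (fun i => x + t i • v) atTop (𝓝 x) := by
    have : Tendsto (fun i => x + t i • v) atTop (𝓝 (x + (0:ℝ) • v)) :=
      tendsto_const_nhds.add ((ht0.smul_const v))
    simpa using this
  have hgt : Tendsto (fun i => gauge K (x + t i • v)) atTop (𝓝 1) := by
    have := (hΨcont.tendsto x).comp hxt
    rwa [hΨx] at this
  have hev : ∀ᶠ i in atTop, 0 < gauge K (x + t i • v) :=
    hgt.eventually (eventually_gt_nhds one_pos)
  set p : ℕ → X := fun i =>
    if 0 < gauge K (x + t i • v) then (gauge K (x + t i • v))⁻¹ • (x + t i • v) else x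
    with hp_def
  set c : ℕ → ℝ := fun i =>
    if 0 < gauge K (x + t i • v) then gauge K (x + t i • v) / t i else 1 with hc_def
  refine ⟨p, c, ?_, ?_, ?_, ?_⟩
  · intro i
    by_cases hi : 0 < gauge K (x + t i • v)
    · simp only [hp_def, if_pos hi]
      refine (gauge_eq_one_iff_mem_frontier hKconv hK0).mp ?_
      rw [gauge_smul_of_nonneg (inv_nonneg.mpr hi.le), smul_eq_mul,
        inv_mul_cancel₀ (ne_of_gt hi)]
    · simp only [hp_def, if_neg hi]; exact hx
  · intro i
    by_cases hi : 0 < gauge K (x + t i • v)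
    · simp only [hc_def, if_pos hi]; exact div_pos hi (htpos i)
    · simp only [hc_def, if_neg hi]; exact one_pos
  · have h1 : Tendsto (fun i => (gauge K (x + t i • v))⁻¹ • (x + t i • v)) atTop
        (𝓝 ((1:ℝ)⁻¹ • x)) := (hgt.inv₀ one_ne_zero).smul hxt
    rw [inv_one, one_smul] at h1
    refine Tendsto.congr' ?_ h1
    filter_upwards [hev] with i hi
    simp only [hp_def, if_pos hi]
  · have hsl : Tendsto (fun i => gslope K x v (t i)) atTop (𝓝 0) := by
      have := (tendsto_gslope hKconv habs x v).comp htt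
      rwa [h] at this
    have h1 : Tendsto (fun i => v - gslope K x v (t i) • x) atTop (𝓝 (v - (0:ℝ) • x)) :=
      tendsto_const_nhds.sub (hsl.smul_const x)
    rw [zero_smul, sub_zero] at h1
    refine Tendsto.congr' ?_ h1
    filter_upwards [hev] with i hi
    simp only [hp_def, hc_def, if_pos hi]
    rw [gslope, hΨx]
    have hgne : gauge K (x + t i • v) ≠ 0 := ne_of_gt hi
    have htne : t i ≠ 0 := ne_of_gt (htpos i)
    match_scalars <;> (all_goals first | (field_simp; ring) | field_simp)

lemma tendsto_slope_gauge_comp (hKconv : Convex ℝ K) (hK0 : K ∈ 𝓝 (0:X))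
    {γ : ℝ → X} {t₀ : ℝ} {v : X} (hγ : HasDerivAt γ v t₀) :
    Tendsto (fun h => (gauge K (γ (t₀ + h)) - gauge K (γ t₀)) / h) (𝓝[>] 0)
      (𝓝 (dg K (γ t₀) v)) := by
  have habs : Absorbent ℝ K := absorbent_nhds_zero hK0
  obtain ⟨C, hC⟩ := hKconv.lipschitz_gauge hK0
  set x := γ t₀ with hx_def
  have hA : Tendsto (gslope K x v) (𝓝[>] 0) (𝓝 (dg K x v)) := tendsto_gslope hKconv habs x v
  have hshift : Tendsto (fun h : ℝ => t₀ + h) (𝓝[>] 0) (𝓝 t₀) := by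
    have : Tendsto (fun h : ℝ => t₀ + h) (𝓝 0) (𝓝 (t₀ + 0)) :=
      (continuous_const.add continuous_id).tendsto 0
    simpa using this.mono_left nhdsWithin_le_nhds
  have hd2 : Tendsto (fun h : ℝ =>
      ‖t₀ + h - t₀‖⁻¹ * ‖γ (t₀ + h) - γ t₀ - (t₀ + h - t₀) • v‖) (𝓝[>] 0) (𝓝 0) :=
    (hasDerivAt_iff_tendsto.mp hγ).comp hshift
  simp only [add_sub_cancel_left] at hd2
  have hE : Tendsto (fun h => (gauge K (γ (t₀ + h)) - gauge K (x + h • v)) / h) (𝓝[>] 0)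
      (𝓝 0) := by
    have hb : Tendsto (fun h : ℝ => (C : ℝ) * (‖h‖⁻¹ * ‖γ (t₀ + h) - x - h • v‖)) (𝓝[>] 0)
        (𝓝 0) := by simpa using hd2.const_mul (C : ℝ)
    refine squeeze_zero_norm' ?_ hb
    filter_upwards [self_mem_nhdsWithin] with h (hh : (0:ℝ) < h)
    have hlip : |gauge K (γ (t₀ + h)) - gauge K (x + h • v)| ≤
        (C : ℝ) * ‖γ (t₀ + h) - (x + h • v)‖ := by
      have := hC.dist_le_mul (γ (t₀ + h)) (x + h • v)
      rwa [Real.dist_eq, dist_eq_norm] at this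
    rw [Real.norm_eq_abs, abs_div, abs_of_pos hh, div_le_iff₀ hh, Real.norm_eq_abs,
      abs_of_pos hh]
    calc |gauge K (γ (t₀ + h)) - gauge K (x + h • v)|
        ≤ (C : ℝ) * ‖γ (t₀ + h) - (x + h • v)‖ := hlip
      _ = (C : ℝ) * (h⁻¹ * ‖γ (t₀ + h) - x - h • v‖) * h := by
          rw [sub_add_eq_sub_sub]; field_simp
  have hsum := hA.add hE
  rw [add_zero] at hsum
  refine hsum.congr fun h => ?_
  rw [gslope, ← add_div]
  congr 1
  ring

lemma hasDerivWithinAt_gauge_comp_Ici (hKconv : Convex ℝ K) (hK0 : K ∈ 𝓝 (0:X))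
    {γ : ℝ → X} {t₀ : ℝ} {v : X} (hγ : HasDerivAt γ v t₀) :
    HasDerivWithinAt (fun t => gauge K (γ t)) (dg K (γ t₀) v) (Ici t₀) t₀ := by
  rw [hasDerivWithinAt_iff_tendsto_slope, Ici_sdiff_left]
  have hmap : Tendsto (fun z : ℝ => z - t₀) (𝓝[>] t₀) (𝓝[>] 0) := by
    refine tendsto_nhdsWithin_of_tendsto_nhds_of_eventually_within _ ?_ ?_
    · have : Tendsto (fun z : ℝ => z - t₀) (𝓝 t₀) (𝓝 (t₀ - t₀)) :=
        (continuous_id.sub continuous_const).tendsto t₀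
      simpa using this.mono_left nhdsWithin_le_nhds
    · filter_upwards [self_mem_nhdsWithin] with z (hz : t₀ < z)
      simpa using hz
  have := (tendsto_slope_gauge_comp hKconv hK0 hγ).comp hmap
  refine this.congr fun z => ?_
  show (gauge K (γ (t₀ + (z - t₀))) - gauge K (γ t₀)) / (z - t₀) = _
  rw [slope_def_field, add_sub_cancel]

lemma gauge_mono_incr_of_rightDeriv {g d : ℝ → ℝ} {a b : ℝ}
    (hg : ContinuousOn g (Ioo a b)) (hd : ∀ t ∈ Ioo a b, HasDerivWithinAt g (d t) (Ici t) t)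
    (h0 : ∀ t ∈ Ioo a b, 0 ≤ d t) {s u : ℝ} (hs : s ∈ Ioo a b) (hu : u ∈ Ioo a b)
    (hsu : s ≤ u) : g s ≤ g u := by
  have hsub : Icc s u ⊆ Ioo a b := fun z hz =>
    ⟨lt_of_lt_of_le hs.1 hz.1, lt_of_le_of_lt hz.2 hu.2⟩
  have hsub' : Ico s u ⊆ Ioo a b := fun z hz => hsub ⟨hz.1, hz.2.le⟩
  have key := image_le_of_deriv_right_le_deriv_boundary
    (f := fun t => -g t) (f' := fun t => -d t) (a := s) (b := u)
    ((hg.mono hsub).neg)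
    (fun z hz => (hd z (hsub' hz)).neg)
    (B := fun _ => -g s) (B' := fun _ => 0) le_rfl continuousOn_const
    (fun z _ => hasDerivWithinAt_const _ _ _)
    (fun z hz => by simpa using h0 z (hsub' hz))
  have := key (right_mem_Icc.mpr hsu)
  simpa using this

lemma const_of_rightDeriv_zero {g : ℝ → ℝ} {a b : ℝ}
    (hg : ContinuousOn g (Ioo a b)) (hd : ∀ t ∈ Ioo a b, HasDerivWithinAt g 0 (Ici t) t) :
    ∀ s ∈ Ioo a b, ∀ u ∈ Ioo a b, g s = g u := by
  have h1 : ∀ s ∈ Ioo a b, ∀ u ∈ Ioo a b, s ≤ u → g s ≤ g u := fun s hs u hu hsu =>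
    gauge_mono_incr_of_rightDeriv (d := fun _ => 0) hg hd (fun _ _ => le_refl 0) hs hu hsu
  have h2 : ∀ s ∈ Ioo a b, ∀ u ∈ Ioo a b, s ≤ u → g u ≤ g s := by
    intro s hs u hu hsu
    have := gauge_mono_incr_of_rightDeriv (g := fun t => -g t) (d := fun _ => 0)
      hg.neg (fun t ht => by have := (hd t ht).neg; rwa [neg_zero] at this) (fun _ _ => le_refl 0) hs hu hsu
    linarith
  intro s hs u hu
  rcases le_total s u with h | h
  · exact le_antisymm (h1 s hs u hu h) (h2 s hs u hu h)
  · exact (le_antisymm (h1 u hu s hs h) (h2 u hu s hs h)).symm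

lemma gauge_const_of_dg_nonneg (hKconv : Convex ℝ K) (hK0 : K ∈ 𝓝 (0:X))
    {γ : ℝ → X} {V : ℝ → X} {a b : ℝ}
    (hγ : ∀ t ∈ Ioo a b, HasDerivAt γ (V t) t)
    (hplus : ∀ t ∈ Ioo a b, 0 ≤ dg K (γ t) (V t))
    (hminus : ∀ t ∈ Ioo a b, 0 ≤ dg K (γ t) (-V t)) :
    ∀ s ∈ Ioo a b, ∀ u ∈ Ioo a b, gauge K (γ s) = gauge K (γ u) := by
  have hΨcont : Continuous (gauge K) := continuous_gauge hKconv hK0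
  have hgcont : ContinuousOn (fun t => gauge K (γ t)) (Ioo a b) := fun t ht =>
    (hΨcont.continuousAt.comp (hγ t ht).continuousAt).continuousWithinAt
  have hup : ∀ s ∈ Ioo a b, ∀ u ∈ Ioo a b, s ≤ u → gauge K (γ s) ≤ gauge K (γ u) := by
    intro s hs u hu hsu
    exact gauge_mono_incr_of_rightDeriv hgcont
      (fun t ht => hasDerivWithinAt_gauge_comp_Ici hKconv hK0 (hγ t ht)) hplus hs hu hsu
  have hdown : ∀ s ∈ Ioo a b, ∀ u ∈ Ioo a b, s ≤ u → gauge K (γ u) ≤ gauge K (γ s) := by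
    intro s hs u hu hsu
    have hmem : ∀ w : ℝ, w ∈ Ioo (-b) (-a) → -w ∈ Ioo a b := by
      intro w hw
      exact ⟨by linarith [hw.2], by linarith [hw.1]⟩
    have hγ2 : ∀ w ∈ Ioo (-b) (-a), HasDerivAt (fun z => γ (-z)) (-(V (-w))) w := by
      intro w hw
      have h1 : HasDerivAt (fun z : ℝ => -z) (-1 : ℝ) w := by
        exact hasDerivAt_neg w
      have := (hγ (-w) (hmem w hw)).scomp w h1
      simpa using (show HasDerivAt (fun z => γ (-z)) ((-1 : ℝ) • V (-w)) w from this)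
    have hgcont2 : ContinuousOn (fun t => gauge K (γ (-t))) (Ioo (-b) (-a)) := fun t ht =>
      (hΨcont.continuousAt.comp (hγ2 t ht).continuousAt).continuousWithinAt
    have h2 : ∀ w ∈ Ioo (-b) (-a), 0 ≤ dg K (γ (-w)) (-(V (-w))) := fun w hw =>
      hminus (-w) (hmem w hw)
    have := gauge_mono_incr_of_rightDeriv hgcont2
      (fun w hw => hasDerivWithinAt_gauge_comp_Ici hKconv hK0 (hγ2 w hw))
      h2 (s := -u) (u := -s) ⟨by linarith [hu.2], by linarith [hu.1]⟩
      ⟨by linarith [hs.2], by linarith [hs.1]⟩ (by linarith)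
    simpa using this
  intro s hs u hu
  rcases le_total s u with h | h
  · exact le_antisymm (hup s hs u hu h) (hdown s hs u hu h)
  · exact (le_antisymm (hup u hu s hs h) (hdown u hu s hs h)).symm

lemma contDiff_mveval {n : ℕ} (Q : MvPolynomial (Fin n) ℝ) :
    ContDiff ℝ 1 (fun v : Fin n → ℝ => MvPolynomial.eval v Q) := by
  induction Q using MvPolynomial.induction_on with
  | C a => simpa using contDiff_const (c := a)
  | add p q hp hq => simpa [MvPolynomial.eval_add] using hp.add hq
  | mul_X p i hp =>
      have : (fun v : Fin n → ℝ => MvPolynomial.eval v (p * MvPolynomial.X i)) =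
          fun v => (MvPolynomial.eval v p) * v i := by
        funext v; simp
      rw [this]
      exact hp.mul ((ContinuousLinearMap.proj i : (Fin n → ℝ) →L[ℝ] ℝ).contDiff)

lemma eval_smul_of_isHomogeneous {n k : ℕ} {Q : MvPolynomial (Fin n) ℝ}
    (h : Q.IsHomogeneous k) (c : ℝ) (v : Fin n → ℝ) :
    MvPolynomial.eval (c • v) Q = c ^ k * MvPolynomial.eval v Q := by
  rw [MvPolynomial.eval_eq', MvPolynomial.eval_eq', Finset.mul_sum]
  refine Finset.sum_congr rfl fun d hd => ?_
  have hdeg : d.degree = k := by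
    by_contra hne
    exact (MvPolynomial.mem_support_iff.mp hd) (h.coeff_eq_zero hne)
  have hsum : ∑ i : Fin n, d i = k := by
    rw [← hdeg, Finsupp.degree]
    exact (Finset.sum_subset (Finset.subset_univ _)
      (fun i _ hi => Finsupp.notMem_support_iff.mp hi)).symm
  have hprod : ∏ i : Fin n, (c • v) i ^ d i = c ^ k * ∏ i : Fin n, v i ^ d i := by
    have hterm : ∀ i : Fin n, (c • v) i ^ d i = c ^ d i * v i ^ d i := by
      intro i; rw [Pi.smul_apply, smul_eq_mul, mul_pow]
    rw [Finset.prod_congr rfl fun i _ => hterm i, Finset.prod_mul_distrib,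
      Finset.prod_pow_eq_pow_sum, hsum]
  rw [hprod]; ring

section Poly

variable [FiniteDimensional ℝ X]

lemma coords_contDiff {n : ℕ} (b : Module.Basis (Fin n) ℝ X) :
    ContDiff ℝ 1 (fun x : X => (fun j => b.repr x j : Fin n → ℝ)) := by
  have h : (fun x : X => (fun j => b.repr x j : Fin n → ℝ)) =
      (LinearMap.toContinuousLinearMap (b.equivFun : X ≃ₗ[ℝ] (Fin n → ℝ)).toLinearMap :
        X →L[ℝ] (Fin n → ℝ)) := by
    funext x j
    simp [Module.Basis.equivFun_apply]
  rw [h]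
  exact ContinuousLinearMap.contDiff _

lemma vf_contDiff {k : ℕ} {W : X → X} (hW : IsHomogPolyVectorField k W) :
    ContDiff ℝ 1 W := by
  obtain ⟨n, b, P, hP, hWx⟩ := hW
  have h : W = fun x => ∑ i, (MvPolynomial.eval (fun j => b.repr x j) (P i)) • b i :=
    funext hWx
  rw [h]
  refine ContDiff.sum fun i _ => ?_
  exact (((contDiff_mveval (P i)).comp (coords_contDiff b)).smul contDiff_const)

lemma fn_contDiff {m : ℕ} {f : X → ℝ} (hf : IsHomogPolyFunction m f) :
    ContDiff ℝ 1 f := by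
  obtain ⟨n, b, P, hP, hfx⟩ := hf
  have h : f = fun x => MvPolynomial.eval (fun j => b.repr x j) P := funext hfx
  rw [h]
  exact (contDiff_mveval P).comp (coords_contDiff b)

omit [FiniteDimensional ℝ X] in
lemma coords_smul {n : ℕ} (b : Module.Basis (Fin n) ℝ X) (c : ℝ) (x : X) :
    (fun j => b.repr (c • x) j : Fin n → ℝ) = c • (fun j => b.repr x j) := by
  funext j
  simp

omit [FiniteDimensional ℝ X] in
lemma vf_smul {k : ℕ} {W : X → X} (hW : IsHomogPolyVectorField k W) (c : ℝ) (x : X) :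
    W (c • x) = c ^ k • W x := by
  obtain ⟨n, b, P, hP, hWx⟩ := hW
  rw [hWx, hWx, Finset.smul_sum]
  refine Finset.sum_congr rfl fun i _ => ?_
  rw [coords_smul, eval_smul_of_isHomogeneous (hP i), smul_smul]

omit [FiniteDimensional ℝ X] in
lemma fn_smul {m : ℕ} {f : X → ℝ} (hf : IsHomogPolyFunction m f) (c : ℝ) (x : X) :
    f (c • x) = c ^ m * f x := by
  obtain ⟨n, b, P, hP, hfx⟩ := hf
  rw [hfx, hfx, coords_smul, eval_smul_of_isHomogeneous hP]

omit [FiniteDimensional ℝ X] in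
lemma fn_dense_ne_zero {m : ℕ} {f : X → ℝ} (hf : IsHomogPolyFunction m f) (hf0 : f ≠ 0) :
    Dense {x : X | f x ≠ 0} := by
  obtain ⟨n, b, P, hP, hfx⟩ := hf
  obtain ⟨x₁, hx₁⟩ : ∃ x₁, f x₁ ≠ 0 := by
    by_contra hcon
    push_neg at hcon
    exact hf0 (funext hcon)
  rw [Metric.dense_iff]
  intro y r hr
  by_cases hy : f y ≠ 0
  · exact ⟨y, Metric.mem_ball_self hr, hy⟩
  set a : Fin n → ℝ := fun j => b.repr y j with ha_def
  set d : Fin n → ℝ := fun j => b.repr (x₁ - y) j with hd_def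
  set Q : Polynomial ℝ := MvPolynomial.eval₂ Polynomial.C
    (fun j => Polynomial.C (a j) + Polynomial.X * Polynomial.C (d j)) P with hQ_def
  have hQt : ∀ t : ℝ, Polynomial.eval t Q = f (y + t • (x₁ - y)) := by
    intro t
    have h1 := MvPolynomial.eval₂_comp_left (Polynomial.evalRingHom t) Polynomial.C
      (fun j => Polynomial.C (a j) + Polynomial.X * Polynomial.C (d j)) P
    have h2 : (Polynomial.evalRingHom t).comp Polynomial.C = RingHom.id ℝ :=
      RingHom.ext fun r => by simp
    rw [h2] at h1
    have h3 : Polynomial.eval t Q = MvPolynomial.eval₂ (RingHom.id ℝ)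
        (fun j => a j + t * d j) P := by
      have h1' : Polynomial.eval t Q = MvPolynomial.eval₂ (RingHom.id ℝ)
          (⇑(Polynomial.evalRingHom t) ∘ fun j =>
            Polynomial.C (a j) + Polynomial.X * Polynomial.C (d j)) P := h1
      rw [h1']
      congr 1
      funext j
      simp only [Function.comp_apply, Polynomial.coe_evalRingHom, Polynomial.eval_add,
        Polynomial.eval_mul, Polynomial.eval_C, Polynomial.eval_X]
    rw [h3, hfx]
    have h4 : (fun j => b.repr (y + t • (x₁ - y)) j : Fin n → ℝ) =
        fun j => a j + t * d j := by
      funext j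
      simp [ha_def, hd_def]
    rw [h4, MvPolynomial.eval₂_eq_eval_map]
    simp
  have hQne : Q ≠ 0 := by
    intro h0
    apply hx₁
    have := hQt 1
    rw [h0] at this
    simpa using this.symm
  obtain ⟨t, htmem, htroot⟩ :=
    (((Set.Ioo_infinite (show (0:ℝ) < r / (‖x₁ - y‖ + 1) by positivity)).diff
      (Polynomial.finite_setOf_isRoot hQne))).nonempty
  rw [Set.mem_Ioo] at htmem
  refine ⟨y + t • (x₁ - y), ?_, ?_⟩
  · rw [Metric.mem_ball, dist_eq_norm]
    have ht0 : 0 < t := htmem.1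
    have ht1 : t < r / (‖x₁ - y‖ + 1) := htmem.2
    have : ‖y + t • (x₁ - y) - y‖ = t * ‖x₁ - y‖ := by
      rw [add_sub_cancel_left, norm_smul, Real.norm_of_nonneg ht0.le]
    rw [this]
    calc t * ‖x₁ - y‖ ≤ t * (‖x₁ - y‖ + 1) := by nlinarith [norm_nonneg (x₁ - y)]
      _ < r := by
          rw [← lt_div_iff₀ (by positivity)] at *
          exact ht1
  · show f (y + t • (x₁ - y)) ≠ 0
    rw [← hQt t]
    exact fun hh => htroot hh

end Poly

end GaugeTangentAux

namespace GaugeTangentAux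

open Set

section Main

variable {X : Type*} [NormedAddCommGroup X] [NormedSpace ℝ X] [FiniteDimensional ℝ X]
variable {K : Set X} {W : X → X} {f : X → ℝ} {k m : ℕ}

/-- Step A: the tangency hypothesis propagates from `∂K` to all nonzero points by
homogeneity. -/
lemma dg_fW_zero (hKcomp : IsCompact K) (hKconv : Convex ℝ K) (hK0 : K ∈ 𝓝 (0:X))
    (hW : IsHomogPolyVectorField k W) (hf : IsHomogPolyFunction m f)
    (htang : ∀ x ∈ frontier K, IsForwardTangent K x (f x • W x)) :
    ∀ y : X, y ≠ 0 → dg K y (f y • W y) = 0 := by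
  intro y hy
  have habs : Absorbent ℝ K := absorbent_nhds_zero hK0
  have hbdd : Bornology.IsVonNBounded ℝ K :=
    (NormedSpace.isVonNBounded_iff ℝ).mpr hKcomp.isBounded
  have hl : 0 < gauge K y := (gauge_pos habs hbdd).mpr hy
  set l := gauge K y with hl_def
  set x := l⁻¹ • y with hx_def
  have hxy : y = l • x := by
    rw [hx_def, smul_smul, mul_inv_cancel₀ (ne_of_gt hl), one_smul]
  have hxfr : x ∈ frontier K := by
    refine (gauge_eq_one_iff_mem_frontier hKconv hK0).mp ?_
    rw [hx_def, gauge_smul_of_nonneg (inv_nonneg.mpr hl.le), smul_eq_mul,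
      inv_mul_cancel₀ (ne_of_gt hl)]
  have h1 : dg K x (f x • W x) = 0 :=
    dg_eq_zero_of_isForwardTangent hKconv hK0 hxfr (htang x hxfr)
  have hfy : f y • W y = l ^ (m + k) • (f x • W x) := by
    rw [hxy, fn_smul hf, vf_smul hW, smul_smul, smul_smul, pow_add]
    congr 1
    ring
  calc dg K y (f y • W y) = dg K (l • x) (l ^ (m + k) • (f x • W x)) := by
        rw [← hxy, hfy]
    _ = l ^ (m + k) * dg K x (f x • W x) := by
        rw [dg_smul_left hKconv habs _ _ hl, dg_smul_right hKconv habs _ _ (pow_pos hl _)]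
    _ = 0 := by rw [h1, mul_zero]

/-- Extraction: if the gauge is locally constant along a curve near `t₀ = 0`, the one-sided
derivative of the gauge in the direction of the velocity vanishes. -/
lemma dg_zero_of_locally_const (hKconv : Convex ℝ K) (hK0 : K ∈ 𝓝 (0:X))
    {γ : ℝ → X} {v : X} (hγ : HasDerivAt γ v 0)
    (hconst : ∀ᶠ h in 𝓝[>] (0:ℝ), gauge K (γ (0 + h)) = gauge K (γ 0)) :
    dg K (γ 0) v = 0 := by
  have hT := tendsto_slope_gauge_comp hKconv hK0 hγ
  have hz : Tendsto (fun h : ℝ => (gauge K (γ (0 + h)) - gauge K (γ 0)) / h) (𝓝[>] 0)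
      (𝓝 0) := by
    refine Tendsto.congr' ?_ tendsto_const_nhds
    filter_upwards [hconst] with h hh
    rw [hh, sub_self, zero_div]
  exact tendsto_nhds_unique hT hz

/-- The two one-sided derivatives of the gauge in directions `±W` vanish at every nonzero
point where `f` does not vanish. -/
lemma dg_both_zero (hKcomp : IsCompact K) (hKconv : Convex ℝ K) (hK0 : K ∈ 𝓝 (0:X))
    (hW : IsHomogPolyVectorField k W) (hf : IsHomogPolyFunction m f)
    (htang : ∀ x ∈ frontier K, IsForwardTangent K x (f x • W x)) :
    ∀ x₀ : X, x₀ ≠ 0 → f x₀ ≠ 0 → dg K x₀ (W x₀) = 0 ∧ dg K x₀ (-W x₀) = 0 := by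
  intro x₀ hx0 hfx0
  have habs : Absorbent ℝ K := absorbent_nhds_zero hK0
  have hΨcont : Continuous (gauge K) := continuous_gauge hKconv hK0
  have hfc : Continuous f := (fn_contDiff hf).continuous
  have hA := dg_fW_zero hKcomp hKconv hK0 hW hf htang
  -- local trajectory of `W` through `x₀`
  obtain ⟨γ, hγ0, ε₀, hε₀, hγd⟩ :=
    ContDiffAt.exists_forall_mem_closedBall_exists_eq_forall_mem_Ioo_hasDerivAt₀
      ((vf_contDiff hW).contDiffAt (x := x₀)) (0:ℝ)
  simp only [zero_sub, zero_add] at hγd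
  -- the set where the sign of `f` is that of `f x₀`, and the point is nonzero
  set U : Set X := {y : X | y ≠ 0 ∧ (0 < f x₀ → 0 < f y) ∧ (f x₀ < 0 → f y < 0)} with hU_def
  have hUopen : IsOpen U := by
    rcases lt_or_gt_of_ne hfx0 with hneg | hpos
    · have : U = {y : X | y ≠ 0} ∩ (f ⁻¹' (Iio 0)) := by
        ext y
        simp only [hU_def, mem_setOf_eq, mem_inter_iff, mem_preimage, mem_Iio]
        constructor
        · rintro ⟨h1, _, h3⟩; exact ⟨h1, h3 hneg⟩
        · rintro ⟨h1, h2⟩; exact ⟨h1, fun hc => absurd hc (not_lt.mpr hneg.le), fun _ => h2⟩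
      rw [this]
      exact (isOpen_compl_singleton).inter (isOpen_Iio.preimage hfc)
    · have : U = {y : X | y ≠ 0} ∩ (f ⁻¹' (Ioi 0)) := by
        ext y
        simp only [hU_def, mem_setOf_eq, mem_inter_iff, mem_preimage, mem_Ioi]
        constructor
        · rintro ⟨h1, h2, _⟩; exact ⟨h1, h2 hpos⟩
        · rintro ⟨h1, h2⟩; exact ⟨h1, fun _ => h2, fun hc => absurd hc (not_lt.mpr hpos.le)⟩
      rw [this]
      exact (isOpen_compl_singleton).inter (isOpen_Ioi.preimage hfc)
  have hx0U : x₀ ∈ U := ⟨hx0, fun h => h, fun h => h⟩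
  -- choose a small symmetric interval on which `γ` stays in `U`
  have h0mem₀ : (0:ℝ) ∈ Ioo (-ε₀) ε₀ := ⟨by linarith, hε₀⟩
  have hγcont0 : ContinuousAt γ 0 := (hγd 0 h0mem₀).continuousAt
  have hUnhds : γ ⁻¹' U ∈ 𝓝 (0:ℝ) := by
    apply hγcont0
    rw [hγ0]
    exact hUopen.mem_nhds hx0U
  obtain ⟨δ, hδ0, hδsub⟩ := Metric.mem_nhds_iff.mp hUnhds
  set ε : ℝ := min δ ε₀ with hε_def
  have hε : 0 < ε := lt_min hδ0 hε₀
  have hImem : ∀ t ∈ Ioo (-ε) ε, t ∈ Ioo (-ε₀) ε₀ := by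
    intro t ht
    have h1 := min_le_right δ ε₀
    exact ⟨by have := ht.1; simp only [hε_def] at this ⊢; linarith,
      by have := ht.2; simp only [hε_def] at this ⊢; linarith⟩
  have hIU : ∀ t ∈ Ioo (-ε) ε, γ t ∈ U := by
    intro t ht
    apply hδsub
    rw [Metric.mem_ball, Real.dist_eq, sub_zero]
    have h1 := min_le_left δ ε₀
    rw [abs_lt]
    exact ⟨by have := ht.1; simp only [hε_def] at this; linarith,
      by have := ht.2; simp only [hε_def] at this; linarith⟩
  have hγd' : ∀ t ∈ Ioo (-ε) ε, HasDerivAt γ (W (γ t)) t := fun t ht =>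
    hγd t (hImem t ht)
  have h0mem : (0:ℝ) ∈ Ioo (-ε) ε := ⟨by linarith, hε⟩
  -- gauge ∘ γ is constant on the small interval
  have hconst : ∀ s ∈ Ioo (-ε) ε, ∀ u ∈ Ioo (-ε) ε, gauge K (γ s) = gauge K (γ u) := by
    have hgcont : ContinuousOn (fun t => gauge K (γ t)) (Ioo (-ε) ε) := fun t ht =>
      (hΨcont.continuousAt.comp (hγd' t ht).continuousAt).continuousWithinAt
    rcases lt_or_gt_of_ne hfx0 with hneg | hpos
    · -- f < 0 near x₀ : work with the reversed curve
      have hdg : ∀ t ∈ Ioo (-ε) ε, dg K (γ t) (-W (γ t)) = 0 := by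
        intro t ht
        obtain ⟨hne, _, hsg⟩ := hIU t ht
        have hfneg : f (γ t) < 0 := hsg hneg
        have h1 : dg K (γ t) (f (γ t) • W (γ t)) = 0 := hA (γ t) hne
        have h2 : f (γ t) • W (γ t) = (-f (γ t)) • (-W (γ t)) := by
          rw [smul_neg, neg_smul, neg_neg]
        rw [h2, dg_smul_right hKconv habs _ _ (by linarith : 0 < -f (γ t))] at h1
        exact (mul_eq_zero.mp h1).resolve_left (by intro hc; linarith)
      -- reversed curve
      have hmem : ∀ w : ℝ, w ∈ Ioo (-ε) ε → -w ∈ Ioo (-ε) ε := by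
        intro w hw; exact ⟨by linarith [hw.2], by linarith [hw.1]⟩
      have hγ2 : ∀ w ∈ Ioo (-ε) ε, HasDerivAt (fun z => γ (-z)) (-(W (γ (-w)))) w := by
        intro w hw
        have h1 : HasDerivAt (fun z : ℝ => -z) (-1 : ℝ) w := by
          exact hasDerivAt_neg w
        have := (hγd' (-w) (hmem w hw)).scomp w h1
        simpa using (show HasDerivAt (fun z => γ (-z)) ((-1 : ℝ) • W (γ (-w))) w from this)
      have hgcont2 : ContinuousOn (fun t => gauge K (γ (-t))) (Ioo (-ε) ε) := fun t ht =>
        (hΨcont.continuousAt.comp (hγ2 t ht).continuousAt).continuousWithinAt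
      have hD : ∀ w ∈ Ioo (-ε) ε,
          HasDerivWithinAt (fun t => gauge K (γ (-t))) 0 (Ici w) w := by
        intro w hw
        have := hasDerivWithinAt_gauge_comp_Ici hKconv hK0 (hγ2 w hw)
        rwa [hdg (-w) (hmem w hw)] at this
      have hc2 := const_of_rightDeriv_zero hgcont2 hD
      intro s hs u hu
      have := hc2 (-s) (hmem s hs) (-u) (hmem u hu)
      simpa using this
    · -- f > 0 near x₀
      have hdg : ∀ t ∈ Ioo (-ε) ε, dg K (γ t) (W (γ t)) = 0 := by
        intro t ht
        obtain ⟨hne, hsg, _⟩ := hIU t ht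
        have hfpos : 0 < f (γ t) := hsg hpos
        have h1 : dg K (γ t) (f (γ t) • W (γ t)) = 0 := hA (γ t) hne
        rw [dg_smul_right hKconv habs _ _ hfpos] at h1
        exact (mul_eq_zero.mp h1).resolve_left (ne_of_gt hfpos)
      have hD : ∀ t ∈ Ioo (-ε) ε,
          HasDerivWithinAt (fun t => gauge K (γ t)) 0 (Ici t) t := by
        intro t ht
        have := hasDerivWithinAt_gauge_comp_Ici hKconv hK0 (hγd' t ht)
        rwa [hdg t ht] at this
      exact const_of_rightDeriv_zero hgcont hD
  -- extraction of the two one-sided derivatives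
  have hev : ∀ᶠ h in 𝓝[>] (0:ℝ), h ∈ Ioo 0 ε :=
    Ioo_mem_nhdsGT_of_mem ⟨le_refl 0, hε⟩
  constructor
  · have hWdg : dg K (γ 0) (W (γ 0)) = 0 := by
      refine dg_zero_of_locally_const hKconv hK0 (hγd' 0 h0mem) ?_
      filter_upwards [hev] with h hh
      rw [zero_add]
      exact hconst h ⟨by linarith [hh.1], hh.2⟩ 0 h0mem
    rwa [hγ0] at hWdg
  · have h1 : HasDerivAt (fun z : ℝ => -z) (-1 : ℝ) 0 := by
      exact hasDerivAt_neg (0:ℝ)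
    set δc : ℝ → X := fun z => γ (-z) with hδc_def
    have hδd : HasDerivAt δc (-(W (γ 0))) 0 := by
      have hg0' : HasDerivAt γ (W (γ 0)) (-0 : ℝ) := by
        rw [neg_zero]; exact hγd' 0 h0mem
      have h2 := hg0'.scomp (0:ℝ) h1
      have h3 : HasDerivAt (γ ∘ fun z : ℝ => -z) (-(W (γ 0))) 0 := by
        simpa using h2
      exact h3
    have hconstδ : ∀ᶠ h in 𝓝[>] (0:ℝ), gauge K (δc (0 + h)) = gauge K (δc 0) := by
      filter_upwards [hev] with h hh
      rw [zero_add]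
      show gauge K (γ (-h)) = gauge K (γ (-0))
      rw [neg_zero]
      exact hconst (-h) ⟨by linarith [hh.2], by linarith [hh.1]⟩ 0 h0mem
    have hWdg : dg K (δc 0) (-(W (γ 0))) = 0 :=
      dg_zero_of_locally_const hKconv hK0 hδd hconstδ
    have hδ0 : δc 0 = x₀ := by rw [hδc_def]; simp [hγ0]
    rw [hδ0, hγ0] at hWdg
    exact hWdg

end Main

end GaugeTangentAux

open Set GaugeTangentAux in
/-- **Lemma.**  Let `K ⊂ X` be a convex body with `0` in its interior and `Ψ = gauge K` its
Minkowski norm.  Let `W : X → X` be a homogeneous polynomial vector field and `f : X → ℝ` a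
nonzero homogeneous polynomial function such that the vector field `x ↦ f(x) • W(x)` is
forward tangent to `∂K`.  Then `Ψ` is constant along every trajectory of `W`, and `W` is
tangent to `∂K`. -/
theorem gauge_constant_along_trajectories_of_fW_tangent
    {X : Type*} [NormedAddCommGroup X] [NormedSpace ℝ X] [FiniteDimensional ℝ X]
    (K : Set X) (hKcomp : IsCompact K) (hKconv : Convex ℝ K)
    (h0 : (0 : X) ∈ interior K)
    (W : X → X) (k : ℕ) (hW : IsHomogPolyVectorField k W)
    (f : X → ℝ) (m : ℕ) (hf : IsHomogPolyFunction m f) (hf0 : f ≠ 0)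
    (htang : ∀ x ∈ frontier K, IsForwardTangent K x (f x • W x)) :
    (∀ (a b : ℝ) (γ : ℝ → X), (∀ t ∈ Set.Ioo a b, HasDerivAt γ (W (γ t)) t) →
      ∀ s ∈ Set.Ioo a b, ∀ t ∈ Set.Ioo a b, gauge K (γ s) = gauge K (γ t)) ∧
    (∀ x ∈ frontier K, IsTangentVec K x (W x)) := by
  classical
  rcases subsingleton_or_nontrivial X with hX | hX
  · constructor
    · intro a b γ _ s _ t _
      rw [Subsingleton.elim (γ s) (γ t)]
    · intro x hx
      exfalso
      have h0K : (0:X) ∈ K := interior_subset h0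
      have hKuniv : K = Set.univ := by
        apply Set.eq_univ_of_forall
        intro z
        rwa [Subsingleton.elim z (0:X)]
      rw [hKuniv, frontier_univ] at hx
      exact hx
  · have hK0 : K ∈ 𝓝 (0:X) := mem_interior_iff_mem_nhds.mp h0
    have habs : Absorbent ℝ K := absorbent_nhds_zero hK0
    have hboth := dg_both_zero hKcomp hKconv hK0 hW hf htang
    have hfc : Continuous f := (fn_contDiff hf).continuous
    have hD : Dense ({x : X | f x ≠ 0} ∩ {x : X | x ≠ 0}) := by
      refine Dense.inter_of_isOpen_left (fn_dense_ne_zero hf hf0) ?_ ?_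
      · rw [← Set.compl_singleton_eq]
        exact dense_compl_singleton (0:X)
      · have : {x : X | f x ≠ 0} = f ⁻¹' ({(0:ℝ)}ᶜ) := rfl
        rw [this]
        exact isOpen_compl_singleton.preimage hfc
    have hWc : Continuous W := (vf_contDiff hW).continuous
    have key : ∀ V : X → X, Continuous V →
        (∀ x : X, f x ≠ 0 → x ≠ 0 → dg K x (V x) = 0) →
        ∀ x : X, 0 ≤ dg K x (V x) := by
      intro V hVc hz x
      apply dg_nonneg_of_gslope_nonneg
      intro t ht
      have hFc : Continuous fun z : X => gauge K (z + t • V z) - gauge K z :=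
        ((continuous_gauge hKconv hK0).comp (continuous_id.add (hVc.const_smul t))).sub
          (continuous_gauge hKconv hK0)
      have hclosed : IsClosed {z : X | 0 ≤ gauge K (z + t • V z) - gauge K z} :=
        isClosed_le continuous_const hFc
      have hsub : {x : X | f x ≠ 0} ∩ {x : X | x ≠ 0} ⊆
          {z : X | 0 ≤ gauge K (z + t • V z) - gauge K z} := by
        rintro z ⟨hz1, hz2⟩
        have h1 : dg K z (V z) = 0 := hz z hz1 hz2
        have h2 := dg_le_gslope hKconv habs z (V z) ht
        rw [h1, gslope] at h2
        rw [mem_setOf_eq]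
        by_contra hc
        push_neg at hc
        have h3 : (gauge K (z + t • V z) - gauge K z) / t < 0 :=
          div_neg_of_neg_of_pos hc ht
        linarith
      have huniv : 0 ≤ gauge K (x + t • V x) - gauge K x := by
        have hcl := closure_minimal hsub hclosed
        rw [hD.closure_eq] at hcl
        exact hcl (mem_univ x)
      rw [gslope]
      exact div_nonneg huniv ht.le
    have hp : ∀ x : X, 0 ≤ dg K x (W x) :=
      key W hWc (fun x h1 h2 => (hboth x h2 h1).1)
    have hm : ∀ x : X, 0 ≤ dg K x (-W x) :=
      key (fun x => -W x) hWc.neg (fun x h1 h2 => (hboth x h2 h1).2)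
    constructor
    · intro a b γ hγ s hs t ht
      exact gauge_const_of_dg_nonneg (V := fun t => W (γ t)) hKconv hK0 hγ
        (fun u _ => hp (γ u)) (fun u _ => hm (γ u)) s hs t ht
    · intro x hxfr
      obtain ⟨γ, hγ0, ε, hε, hγd⟩ :=
        ContDiffAt.exists_forall_mem_closedBall_exists_eq_forall_mem_Ioo_hasDerivAt₀
          ((vf_contDiff hW).contDiffAt (x := x)) (0:ℝ)
      simp only [zero_sub, zero_add] at hγd
      have h0mem : (0:ℝ) ∈ Ioo (-ε) ε := ⟨by linarith, hε⟩
      have hconst := gauge_const_of_dg_nonneg (V := fun t => W (γ t)) hKconv hK0 hγd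
        (fun u _ => hp (γ u)) (fun u _ => hm (γ u))
      have hev : ∀ᶠ h in 𝓝[>] (0:ℝ), h ∈ Ioo 0 ε :=
        Ioo_mem_nhdsGT_of_mem ⟨le_refl 0, hε⟩
      have hdgW : dg K x (W x) = 0 := by
        have := dg_zero_of_locally_const hKconv hK0 (hγd 0 h0mem) (by
          filter_upwards [hev] with h hh
          rw [zero_add]
          exact hconst h ⟨by linarith [hh.1], hh.2⟩ 0 h0mem)
        rwa [hγ0] at this
      have hdgmW : dg K x (-W x) = 0 := by
        have h1 : HasDerivAt (fun z : ℝ => -z) (-1 : ℝ) 0 := by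
          exact hasDerivAt_neg (0:ℝ)
        set δc : ℝ → X := fun z => γ (-z) with hδc_def
        have hδd : HasDerivAt δc (-(W (γ 0))) 0 := by
          have hg0' : HasDerivAt γ (W (γ 0)) (-0 : ℝ) := by
            rw [neg_zero]; exact hγd 0 h0mem
          have h2 := hg0'.scomp (0:ℝ) h1
          have h3 : HasDerivAt (γ ∘ fun z : ℝ => -z) (-(W (γ 0))) 0 := by
            simpa using h2
          exact h3
        have hconstδ : ∀ᶠ h in 𝓝[>] (0:ℝ), gauge K (δc (0 + h)) = gauge K (δc 0) := by
          filter_upwards [hev] with h hh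
          rw [zero_add]
          show gauge K (γ (-h)) = gauge K (γ (-0))
          rw [neg_zero]
          exact hconst (-h) ⟨by linarith [hh.2], by linarith [hh.1]⟩ 0 h0mem
        have hWdg : dg K (δc 0) (-(W (γ 0))) = 0 :=
          dg_zero_of_locally_const hKconv hK0 hδd hconstδ
        have hδ0 : δc 0 = x := by rw [hδc_def]; simp [hγ0]
        rw [hδ0, hγ0] at hWdg
        exact hWdg
      exact ⟨isForwardTangent_of_dg_eq_zero hKconv hK0 hxfr hdgW,
        isForwardTangent_of_dg_eq_zero hKconv hK0 hxfr hdgmW⟩
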